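/- Let μ be a Borel measure finite on dyadic cubes and {b_Q}_{Q∈𝒟} an L^∞(μ)-accretive system with adapted operators E^μ_Q and Δ^μ_Q as usual, and let 𝒮_b = {Q : b_Q ≠ b_{Q^{(1)}}·1_Q}. Then for every f ∈ L²(μ) and every dyadic cube Q, Δ^μ_Q f − (Δ^μ_Q)² f = ∑_{P ∈ ch Q ∩ 𝒮_b} φ^μ_P, where φ^μ_P = (⟨f⟩^μ_Q/⟨b_Q⟩^μ_Q)( (⟨b_Q⟩^μ_P/⟨b_P⟩^μ_P) b_P − b_Q ) 1_P, and moreover ‖φ^μ_P‖_{L²(μ)} ≤ C |⟨f⟩^μ_Q| μ(P)^{1/2} with C depending only on the accretivity constants. -/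

import Mathlib

open MeasureTheory Filter
open scoped ENNReal

/-- A dyadic cube in `ℝⁿ`, encoded by its generation `k` (side length `2 ^ k`)
and position `m` (corner at `m * 2 ^ k`). -/
structure DyadicCube (n : ℕ) where
  k : ℤ
  m : Fin n → ℤ

namespace DyadicCube

variable {n : ℕ}

/-- The underlying half-open cube in `ℝⁿ`. -/
def toSet (Q : DyadicCube n) : Set (Fin n → ℝ) :=
  {x | ∀ i, (Q.m i : ℝ) * (2 : ℝ) ^ Q.k ≤ x i ∧ x i < ((Q.m i : ℝ) + 1) * (2 : ℝ) ^ Q.k}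

/-- The side length `ℓ(Q)` of the cube. -/
noncomputable def len (Q : DyadicCube n) : ℝ := (2 : ℝ) ^ Q.k

/-- The dyadic parent `Q^{(1)}`. -/
def parent (Q : DyadicCube n) : DyadicCube n :=
  ⟨Q.k + 1, fun i => Int.fdiv (Q.m i) 2⟩

/-- The ancestor `Q^{(r)}` of order `r`. -/
def iterParent (Q : DyadicCube n) (r : ℕ) : DyadicCube n := parent^[r] Q

/-- The dyadic child of `Q` indexed by `ε : Fin n → Bool`. -/
def child (Q : DyadicCube n) (ε : Fin n → Bool) : DyadicCube n :=
  ⟨Q.k - 1, fun i => 2 * Q.m i + (if ε i then 1 else 0)⟩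

/-- The descendant of `Q` of order `r` indexed by `v`; these enumerate `ch^r Q`. -/
def childIter (Q : DyadicCube n) (r : ℕ) (v : Fin n → Fin (2 ^ r)) : DyadicCube n :=
  ⟨Q.k - r, fun i => 2 ^ r * Q.m i + ((v i : ℕ) : ℤ)⟩

end DyadicCube

variable {n : ℕ}

/-- The `μ`-average of `f` over a dyadic cube (zero when the cube is `μ`-null). -/
noncomputable def avg (μ : Measure (Fin n → ℝ)) (f : (Fin n → ℝ) → ℝ) (Q : DyadicCube n) : ℝ :=
  if μ Q.toSet = 0 then 0 else (∫ x in Q.toSet, f x ∂μ) / (μ Q.toSet).toReal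

/-- The expectation `E^b_Q f = (⟨f⟩_Q / ⟨b⟩_Q) · b · 1_Q` adapted to an accretive function `b`. -/
noncomputable def Eb (μ : Measure (Fin n → ℝ)) (b f : (Fin n → ℝ) → ℝ) (Q : DyadicCube n) :
    (Fin n → ℝ) → ℝ :=
  fun x => (avg μ f Q / avg μ b Q) * Q.toSet.indicator b x

/-- The martingale difference `Δ^b_Q f = ∑_{Q' ∈ ch Q} E^b_{Q'} f − E^b_Q f`. -/
noncomputable def Db (μ : Measure (Fin n → ℝ)) (b f : (Fin n → ℝ) → ℝ) (Q : DyadicCube n) :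
    (Fin n → ℝ) → ℝ :=
  fun x => (∑ ε : Fin n → Bool, Eb μ b f (Q.child ε) x) - Eb μ b f Q x

/-- The expectation `E^μ_Q f = (⟨f⟩_Q / ⟨b_Q⟩_Q) b_Q` adapted to an accretive system. -/
noncomputable def Esys (μ : Measure (Fin n → ℝ)) (b : DyadicCube n → (Fin n → ℝ) → ℝ)
    (f : (Fin n → ℝ) → ℝ) (Q : DyadicCube n) : (Fin n → ℝ) → ℝ :=
  fun x => (avg μ f Q / avg μ (b Q) Q) * b Q x

/-- The martingale difference `Δ^μ_Q` adapted to an accretive system. -/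
noncomputable def Dsys (μ : Measure (Fin n → ℝ)) (b : DyadicCube n → (Fin n → ℝ) → ℝ)
    (f : (Fin n → ℝ) → ℝ) (Q : DyadicCube n) : (Fin n → ℝ) → ℝ :=
  fun x => (∑ ε : Fin n → Bool, Esys μ b f (Q.child ε) x) - Esys μ b f Q x

/-- The (formal) adjoint `(Δ^μ_Q)^*`, given by its explicit formula. -/
noncomputable def DsysStar (μ : Measure (Fin n → ℝ)) (b : DyadicCube n → (Fin n → ℝ) → ℝ)
    (f : (Fin n → ℝ) → ℝ) (Q : DyadicCube n) : (Fin n → ℝ) → ℝ :=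
  fun x => ∑ ε : Fin n → Bool,
    (Q.child ε).toSet.indicator
      (fun _ => avg μ (fun y => b (Q.child ε) y * f y) (Q.child ε)
                  / avg μ (b (Q.child ε)) (Q.child ε)
                - avg μ (fun y => b Q y * f y) Q / avg μ (b Q) Q) x

/-- The set `𝒮_b` of cubes where the accretive system changes between generations. -/
def Sb (b : DyadicCube n → (Fin n → ℝ) → ℝ) : Set (DyadicCube n) :=
  {Q | b Q ≠ fun x => Q.toSet.indicator (b Q.parent) x}

/-- An `L^∞(μ)`-accretive system with constants `δ` and `C`. -/
structure AccretiveSystem (μ : Measure (Fin n → ℝ)) (b : DyadicCube n → (Fin n → ℝ) → ℝ)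
    (δ C : ℝ) : Prop where
  meas : ∀ Q : DyadicCube n, Measurable (b Q)
  supp : ∀ Q : DyadicCube n, ∀ x, x ∉ Q.toSet → b Q x = 0
  bdd : ∀ Q : DyadicCube n, eLpNorm (b Q) ∞ μ ≤ ENNReal.ofReal C
  acc : ∀ Q : DyadicCube n, δ * (μ Q.toSet).toReal ≤ |∫ x in Q.toSet, b Q x ∂μ|

/-- A family of dyadic cubes is `μ`-sparse (i.e. `μ`-Carleson) with constant `Λ`. -/
def IsSparse (μ : Measure (Fin n → ℝ)) (S : Set (DyadicCube n)) (Λ : ℝ≥0∞) : Prop :=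
  ∀ R : DyadicCube n,
    ∑' Q : {Q : DyadicCube n // Q ∈ S ∧ Q.toSet ⊆ R.toSet}, μ Q.1.toSet ≤ Λ * μ R.toSet

namespace DyadicCube

lemma parent_child' (Q : DyadicCube n) (ε : Fin n → Bool) : (Q.child ε).parent = Q := by
  cases Q with
  | mk k m =>
    simp only [child, parent]
    congr 1
    · omega
    · funext i
      rw [Int.fdiv_eq_ediv_of_nonneg _ (by norm_num)]
      by_cases h : ε i <;> simp [h] <;> omega

lemma two_zpow_pos (k : ℤ) : (0:ℝ) < (2:ℝ) ^ k := zpow_pos (by norm_num) k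

lemma zpow_succ' (k : ℤ) : (2:ℝ) ^ k = (2:ℝ) ^ (k-1) * 2 := by
  rw [← zpow_add_one₀ (by norm_num : (2:ℝ) ≠ 0) (k-1)]; ring_nf

lemma mem_child_iff (Q : DyadicCube n) (ε : Fin n → Bool) (x : Fin n → ℝ) :
    x ∈ (Q.child ε).toSet ↔ ∀ i,
      ((2 * Q.m i + (if ε i then 1 else 0) : ℤ) : ℝ) * (2:ℝ) ^ (Q.k - 1) ≤ x i ∧
      x i < ((2 * Q.m i + (if ε i then 1 else 0) : ℤ) + 1 : ℝ) * (2:ℝ) ^ (Q.k - 1) := by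
  rfl

lemma child_subset (Q : DyadicCube n) (ε : Fin n → Bool) : (Q.child ε).toSet ⊆ Q.toSet := by
  intro x hx
  rw [mem_child_iff] at hx
  intro i
  obtain ⟨h1, h2⟩ := hx i
  have hp := two_zpow_pos (Q.k - 1)
  have hk := zpow_succ' Q.k
  constructor
  · refine le_trans ?_ h1
    rw [hk]
    by_cases h : ε i <;> simp [h] <;> push_cast <;> nlinarith
  · refine lt_of_lt_of_le h2 ?_
    rw [hk]
    by_cases h : ε i <;> simp [h] <;> push_cast <;> nlinarith

lemma child_disjoint (Q : DyadicCube n) {ε ε' : Fin n → Bool} (h : ε ≠ ε') :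
    Disjoint (Q.child ε).toSet (Q.child ε').toSet := by
  rw [Set.disjoint_left]
  intro x hx hx'
  rw [mem_child_iff] at hx hx'
  obtain ⟨i, hi⟩ := Function.ne_iff.mp h
  obtain ⟨a1, a2⟩ := hx i
  obtain ⟨b1, b2⟩ := hx' i
  have hp := two_zpow_pos (Q.k - 1)
  rcases Bool.eq_false_or_eq_true (ε i) with h1 | h1 <;>
    rcases Bool.eq_false_or_eq_true (ε' i) with h2 | h2 <;>
      simp [h1, h2] at a1 a2 b1 b2 hi <;> push_cast at a1 a2 b1 b2 <;> nlinarith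

lemma exists_child (Q : DyadicCube n) {x : Fin n → ℝ} (hx : x ∈ Q.toSet) :
    ∃ ε : Fin n → Bool, x ∈ (Q.child ε).toSet := by
  refine ⟨fun i => decide (((2 * Q.m i + 1 : ℤ) : ℝ) * (2:ℝ) ^ (Q.k - 1) ≤ x i), ?_⟩
  rw [mem_child_iff]
  intro i
  have h1 := (hx i).1
  have h2 := (hx i).2
  have hk := zpow_succ' Q.k
  rw [hk] at h1 h2
  by_cases h : ((2 * Q.m i + 1 : ℤ) : ℝ) * (2:ℝ) ^ (Q.k - 1) ≤ x i
  · simp only [decide_eq_true_eq, if_pos h]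
    push_cast at h ⊢
    constructor <;> nlinarith [h1, h2, h]
  · simp only [decide_eq_true_eq, if_neg h]
    push_cast at h ⊢
    constructor <;> nlinarith [h1, h2, h]

lemma measurableSet_toSet (Q : DyadicCube n) : MeasurableSet Q.toSet := by
  have : Q.toSet = Set.pi Set.univ
      (fun i => Set.Ico ((Q.m i : ℝ) * (2:ℝ) ^ Q.k) (((Q.m i : ℝ) + 1) * (2:ℝ) ^ Q.k)) := by
    ext x; simp [toSet, Set.mem_pi, Set.mem_Ico]
  rw [this]
  exact MeasurableSet.univ_pi fun i => measurableSet_Ico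

lemma toSet_eq_iUnion (Q : DyadicCube n) : Q.toSet = ⋃ ε : Fin n → Bool, (Q.child ε).toSet := by
  ext x
  simp only [Set.mem_iUnion]
  exact ⟨fun h => Q.exists_child h, fun ⟨ε, h⟩ => Q.child_subset ε h⟩

end DyadicCube

open Classical in
/-- The error formula `Δ^μ_Q f − (Δ^μ_Q)² f = ∑_{P ∈ ch Q ∩ 𝒮_b} φ^μ_P`, where
`φ^μ_P = (⟨f⟩_Q/⟨b_Q⟩_Q)((⟨b_Q⟩_P/⟨b_P⟩_P) b_P − b_Q) 1_P`, together with the bound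
`‖φ^μ_P‖_{L²(μ)} ≤ C |⟨f⟩^μ_Q| μ(P)^{1/2}`. -/
theorem error_formula (δ Cb : ℝ) (hδ : 0 < δ) (hCb : 0 < Cb) :
    ∃ C : ℝ, 0 < C ∧
      ∀ (n : ℕ) (μ : Measure (Fin n → ℝ)),
        (∀ Q : DyadicCube n, μ Q.toSet < ⊤) →
        (∀ Q : DyadicCube n, μ Q.toSet ≠ 0) →
        ∀ b : DyadicCube n → (Fin n → ℝ) → ℝ, AccretiveSystem μ b δ Cb →
        ∀ f : (Fin n → ℝ) → ℝ, MemLp f 2 μ → ∀ Q : DyadicCube n,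
          (∀ x, Dsys μ b f Q x - Dsys μ b (Dsys μ b f Q) Q x
              = ∑ ε : Fin n → Bool,
                  if Q.child ε ∈ Sb b then
                    (Q.child ε).toSet.indicator
                      (fun y => (avg μ f Q / avg μ (b Q) Q) *
                        ((avg μ (b Q) (Q.child ε) / avg μ (b (Q.child ε)) (Q.child ε))
                            * b (Q.child ε) y - b Q y)) x
                  else 0) ∧
          ∀ ε : Fin n → Bool, Q.child ε ∈ Sb b →
            eLpNorm ((Q.child ε).toSet.indicator
                (fun y => (avg μ f Q / avg μ (b Q) Q) *
                  ((avg μ (b Q) (Q.child ε) / avg μ (b (Q.child ε)) (Q.child ε))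
                      * b (Q.child ε) y - b Q y))) 2 μ
              ≤ ENNReal.ofReal (C * |avg μ f Q|) * μ (Q.child ε).toSet ^ (1/2 : ℝ)  := by
  classical
  refine ⟨(Cb * Cb / δ + Cb) / δ, by positivity, ?_⟩
  intro n μ hfin hne b hb f hf Q
  -- basic facts
  have htR : ∀ P : DyadicCube n, 0 < (μ P.toSet).toReal :=
    fun P => ENNReal.toReal_pos (hne P) (hfin P).ne
  have avg_def : ∀ (h : (Fin n → ℝ) → ℝ) (P : DyadicCube n),
      avg μ h P = (∫ x in P.toSet, h x ∂μ) / (μ P.toSet).toReal :=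
    fun h P => if_neg (hne P)
  have int_eq : ∀ (h : (Fin n → ℝ) → ℝ) (P : DyadicCube n),
      ∫ x in P.toSet, h x ∂μ = avg μ h P * (μ P.toSet).toReal := by
    intro h P
    rw [avg_def, div_mul_cancel₀]
    exact (htR P).ne'
  have intb : ∀ P R : DyadicCube n, IntegrableOn (b P) R.toSet μ := by
    intro P R
    have hmem : MemLp (b P) ∞ μ :=
      ⟨(hb.meas P).aestronglyMeasurable, lt_of_le_of_lt (hb.bdd P) ENNReal.ofReal_lt_top⟩
    haveI : IsFiniteMeasure (μ.restrict R.toSet) :=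
      ⟨by rw [Measure.restrict_apply_univ]; exact hfin R⟩
    exact memLp_one_iff_integrable.mp ((hmem.restrict _).mono_exponent le_top)
  have intf : ∀ R : DyadicCube n, IntegrableOn f R.toSet μ := by
    intro R
    haveI : IsFiniteMeasure (μ.restrict R.toSet) :=
      ⟨by rw [Measure.restrict_apply_univ]; exact hfin R⟩
    exact memLp_one_iff_integrable.mp
      ((hf.restrict _).mono_exponent (by norm_num))
  have habs : ∀ P : DyadicCube n, δ ≤ |avg μ (b P) P| := by
    intro P
    have h1 := hb.acc P
    rw [int_eq (b P) P, abs_mul, abs_of_pos (htR P)] at h1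
    exact le_of_mul_le_mul_right h1 (htR P)
  have hbne : ∀ P : DyadicCube n, avg μ (b P) P ≠ 0 := by
    intro P h
    have h2 := habs P
    rw [h, abs_zero] at h2
    linarith
  have hbd : ∀ P : DyadicCube n, ∀ᵐ y ∂μ, |b P y| ≤ Cb := by
    intro P
    filter_upwards [ae_le_eLpNormEssSup (f := b P) (μ := μ)] with y hy
    have h2 : ‖b P y‖ₑ ≤ ENNReal.ofReal Cb := by
      refine le_trans hy ?_
      rw [← eLpNorm_exponent_top]
      exact hb.bdd P
    rwa [← ofReal_norm_eq_enorm, ENNReal.ofReal_le_ofReal_iff hCb.le,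
      Real.norm_eq_abs] at h2
  have havg_le : ∀ P R : DyadicCube n, |avg μ (b P) R| ≤ Cb := by
    intro P R
    have h1 : ‖∫ x in R.toSet, b P x ∂μ‖ ≤ Cb * (μ R.toSet).toReal := by
      refine norm_setIntegral_le_of_norm_le_const_ae (hfin R) ?_
      filter_upwards [ae_restrict_of_ae (hbd P)] with y hy
      rwa [Real.norm_eq_abs]
    rw [Real.norm_eq_abs] at h1
    rw [avg_def, abs_div, abs_of_pos (htR R), div_le_iff₀ (htR R)]
    exact h1
  -- child abbreviation
  set P : (Fin n → Bool) → DyadicCube n := fun ε => Q.child ε with hP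
  -- support / disjointness integral facts
  have I2 : ∀ ε ε' : Fin n → Bool, ε ≠ ε' →
      ∫ x in (P ε').toSet, b (P ε) x ∂μ = 0 := by
    intro ε ε' hne'
    refine setIntegral_eq_zero_of_forall_eq_zero fun x hx => ?_
    refine hb.supp (P ε) x fun hmem => ?_
    exact Set.disjoint_left.mp (Q.child_disjoint hne') hmem hx
  have I3 : ∀ ε : Fin n → Bool,
      ∫ x in Q.toSet, b (P ε) x ∂μ = ∫ x in (P ε).toSet, b (P ε) x ∂μ := by
    intro ε
    rw [setIntegral_eq_integral_of_forall_compl_eq_zero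
        (fun x hx => hb.supp (P ε) x fun hm => hx (Q.child_subset ε hm)),
      setIntegral_eq_integral_of_forall_compl_eq_zero (fun x hx => hb.supp (P ε) x hx)]
  have I4 : ∫ x in Q.toSet, f x ∂μ = ∑ ε : Fin n → Bool, ∫ x in (P ε).toSet, f x ∂μ := by
    have hu := Q.toSet_eq_iUnion
    rw [hu, integral_iUnion (fun ε => (P ε).measurableSet_toSet)
      (fun ε ε' h => Q.child_disjoint h) (by rw [← hu]; exact intf Q), tsum_fintype]
  -- g = Dsys f Q
  set g : (Fin n → ℝ) → ℝ := Dsys μ b f Q with hg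
  have hg' : g = fun x =>
      (∑ ε : Fin n → Bool, (avg μ f (P ε) / avg μ (b (P ε)) (P ε)) * b (P ε) x)
        - (avg μ f Q / avg μ (b Q) Q) * b Q x := rfl
  set A : DyadicCube n → ℝ := fun R => avg μ f R / avg μ (b R) R with hA
  -- integrals of g over cubes
  have intg : ∀ R : DyadicCube n, IntegrableOn g R.toSet μ := by
    intro R
    rw [hg']
    exact (integrable_finset_sum _ fun ε _ => ((intb (P ε) R).const_mul _)).sub
      ((intb Q R).const_mul _)
  have gint : ∀ R : DyadicCube n,
      ∫ x in R.toSet, g x ∂μ =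
        (∑ ε : Fin n → Bool, A (P ε) * ∫ x in R.toSet, b (P ε) x ∂μ)
          - A Q * ∫ x in R.toSet, b Q x ∂μ := by
    intro R
    rw [hg', integral_sub (integrable_finset_sum _ fun ε _ => ((intb (P ε) R).const_mul _))
      ((intb Q R).const_mul _), integral_finset_sum _ fun ε _ => ((intb (P ε) R).const_mul _)]
    simp [integral_const_mul, hA]
  have hgQ : ∫ x in Q.toSet, g x ∂μ = 0 := by
    rw [gint Q]
    have h1 : ∀ ε : Fin n → Bool,
        A (P ε) * ∫ x in Q.toSet, b (P ε) x ∂μ = ∫ x in (P ε).toSet, f x ∂μ := by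
      intro ε
      rw [I3 ε, int_eq (b (P ε)) (P ε), int_eq f (P ε), hA]
      field_simp [hbne (P ε)]
    rw [Finset.sum_congr rfl fun ε _ => h1 ε, ← I4, int_eq (b Q) Q, int_eq f Q, hA]
    field_simp [hbne Q]
    ring
  have avg_g_Q : avg μ g Q = 0 := by rw [avg_def, hgQ, zero_div]
  have avg_g_child : ∀ ε : Fin n → Bool,
      avg μ g (P ε) = avg μ f (P ε) - A Q * avg μ (b Q) (P ε) := by
    intro ε
    have h1 : ∫ x in (P ε).toSet, g x ∂μ =
        (avg μ f (P ε) - A Q * avg μ (b Q) (P ε)) * (μ (P ε).toSet).toReal := by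
      rw [gint (P ε)]
      rw [Finset.sum_eq_single_of_mem ε (Finset.mem_univ ε)
        (fun ε' _ h => by rw [I2 ε' ε h, mul_zero])]
      rw [int_eq (b (P ε)) (P ε), int_eq (b Q) (P ε), hA]
      field_simp [hbne (P ε), hbne Q]
    rw [avg_def, h1, mul_div_cancel_right₀ _ (htR (P ε)).ne']
  -- the scalar coefficients
  have hc : ∀ ε : Fin n → Bool,
      A (P ε) - avg μ g (P ε) / avg μ (b (P ε)) (P ε)
        = A Q * (avg μ (b Q) (P ε) / avg μ (b (P ε)) (P ε)) := by
    intro ε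
    rw [hA, div_sub_div_same, avg_g_child ε]
    rw [show avg μ f (P ε) - (avg μ f (P ε) - A Q * avg μ (b Q) (P ε))
        = A Q * avg μ (b Q) (P ε) by ring]
    rw [mul_div_assoc]
  -- sum of indicators of children reconstructs b Q
  have hsum : ∀ x, ∑ ε : Fin n → Bool, (P ε).toSet.indicator (b Q) x = b Q x := by
    intro x
    by_cases hx : x ∈ Q.toSet
    · obtain ⟨ε₀, hε₀⟩ := Q.exists_child hx
      rw [Finset.sum_eq_single_of_mem ε₀ (Finset.mem_univ ε₀)
        (fun ε' _ h => Set.indicator_of_notMem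
          (fun hm => Set.disjoint_left.mp (Q.child_disjoint h) hm hε₀) _)]
      exact Set.indicator_of_mem hε₀ _
    · rw [hb.supp Q x hx]
      exact Finset.sum_eq_zero fun ε _ => Set.indicator_of_notMem
        (fun hm => hx (Q.child_subset ε hm)) _
  constructor
  · -- the pointwise identity
    intro x
    have hDg : Dsys μ b g Q x =
        ∑ ε : Fin n → Bool, (avg μ g (P ε) / avg μ (b (P ε)) (P ε)) * b (P ε) x := by
      simp only [Dsys, Esys, avg_g_Q, zero_div, zero_mul, sub_zero]
      rfl
    have hDf : g x =
        (∑ ε : Fin n → Bool, A (P ε) * b (P ε) x) - A Q * b Q x := rfl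
    show g x - Dsys μ b g Q x = _
    rw [hDf, hDg]
    have key : (∑ ε : Fin n → Bool, A (P ε) * b (P ε) x) - A Q * b Q x
          - ∑ ε : Fin n → Bool, (avg μ g (P ε) / avg μ (b (P ε)) (P ε)) * b (P ε) x
        = ∑ ε : Fin n → Bool,
            ((A (P ε) - avg μ g (P ε) / avg μ (b (P ε)) (P ε)) * b (P ε) x
              - A Q * (P ε).toSet.indicator (b Q) x) := by
      simp only [sub_mul, Finset.sum_sub_distrib, ← Finset.mul_sum, hsum x]
      ring
    rw [key]
    refine Finset.sum_congr rfl fun ε _ => ?_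
    rw [hc ε]
    by_cases hmem : P ε ∈ Sb b
    · rw [if_pos hmem, Set.indicator_apply, Set.indicator_apply]
      by_cases hx : x ∈ (P ε).toSet
      · simp only [if_pos hx, if_pos (show x ∈ (Q.child ε).toSet from hx)]; ring
      · simp only [if_neg hx, if_neg (show x ∉ (Q.child ε).toSet from hx), hb.supp (P ε) x hx, mul_zero, sub_zero, mul_zero]
    · rw [if_neg hmem]
      have hbe : b (P ε) = fun y => (P ε).toSet.indicator (b Q) y := by
        have := not_not.mp hmem
        rwa [Q.parent_child' ε] at this
      have havg : avg μ (b Q) (P ε) = avg μ (b (P ε)) (P ε) := by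
        rw [avg_def, avg_def, hbe]
        congr 1
        exact (setIntegral_congr_fun (P ε).measurableSet_toSet
          (fun y hy => (Set.indicator_of_mem hy _).symm))
      rw [havg, div_self (hbne (P ε)), mul_one]
      rw [show b (P ε) x = (P ε).toSet.indicator (b Q) x from congrFun hbe x]
      ring
  · -- the norm bound
    intro ε hmem
    set r : ℝ := avg μ (b Q) (P ε) / avg μ (b (P ε)) (P ε) with hr
    set M : ℝ := (Cb * Cb / δ + Cb) / δ * |avg μ f Q| with hM
    have hM0 : 0 ≤ M := by positivity
    have habsA : |A Q| ≤ |avg μ f Q| / δ := by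
      rw [hA, abs_div]
      exact div_le_div_of_nonneg_left (abs_nonneg _) hδ (habs Q)
    have habsr : |r| ≤ Cb / δ := by
      rw [hr, abs_div]
      refine le_trans (div_le_div_of_nonneg_left (abs_nonneg _) hδ (habs (P ε))) ?_
      exact div_le_div_of_nonneg_right (havg_le Q (P ε)) hδ.le
    have hae : ∀ᵐ y ∂μ,
        ‖(P ε).toSet.indicator (fun y => A Q * (r * b (P ε) y - b Q y)) y‖
          ≤ ‖(P ε).toSet.indicator (fun _ => M) y‖ := by
      filter_upwards [hbd (P ε), hbd Q] with y h1 h2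
      by_cases hy : y ∈ (P ε).toSet
      · rw [Set.indicator_of_mem hy, Set.indicator_of_mem hy, Real.norm_eq_abs,
          Real.norm_eq_abs, abs_of_nonneg hM0]
        calc |A Q * (r * b (P ε) y - b Q y)|
            ≤ |A Q| * (|r| * |b (P ε) y| + |b Q y|) := by
              rw [abs_mul]
              refine mul_le_mul_of_nonneg_left ?_ (abs_nonneg _)
              refine le_trans (abs_sub _ _) ?_
              rw [abs_mul]
          _ ≤ (|avg μ f Q| / δ) * (Cb / δ * Cb + Cb) := by
              have hb1 : |r| * |b (P ε) y| ≤ Cb / δ * Cb :=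
                mul_le_mul habsr h1 (abs_nonneg _) (by positivity)
              refine mul_le_mul habsA ?_ (by positivity) (by positivity)
              linarith
          _ = M := by rw [hM]; ring
      · rw [Set.indicator_of_notMem hy, Set.indicator_of_notMem hy]
    refine le_trans (eLpNorm_mono_ae hae) ?_
    rw [eLpNorm_indicator_const (P ε).measurableSet_toSet (by norm_num) (by norm_num)]
    have h2 : ((2:ℝ≥0∞).toReal) = 2 := by norm_num
    rw [h2]
    rw [Real.enorm_eq_ofReal hM0, hM]
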